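/- Let P₀ be a σ-finite measure on a measurable space X, let t : X → ℝⁿ be measurable, let ψ(θ) = ln ∫ exp(θ·t(x)) dP₀(x), and let Θ be an open subset of {θ : ψ(θ) < ∞}. Let F : X → ℝ be a bounded measurable function and define the expected fitness J(θ) = ∫ F(x) dP_θ(x), where P_θ has density exp(θ·t(x) − ψ(θ)) with respect to P₀. Then J is differentiable on Θ, ψ is differentiable on Θ with ∇ψ(θ) = ∫ t dP_θ, and the Euclidean gradient of J is given by ∇J(θ) = ∫ F(x)·(t(x) − ∇ψ(θ)) dP_θ(x). -/

import Mathlib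

open MeasureTheory
open scoped RealInnerProductSpace NNReal ENNReal

lemma euclid_norm_le_sum_abs {n : ℕ} (v : EuclideanSpace ℝ (Fin n)) :
    ‖v‖ ≤ ∑ i, |v i| := by
  have hv := (EuclideanSpace.basisFun (Fin n) ℝ).sum_repr v
  simp only [EuclideanSpace.basisFun_repr] at hv
  calc ‖v‖ = ‖∑ i, v i • EuclideanSpace.basisFun (Fin n) ℝ i‖ := by rw [hv]
    _ ≤ ∑ i, ‖v i • EuclideanSpace.basisFun (Fin n) ℝ i‖ := norm_sum_le _ _
    _ = ∑ i, |v i| := by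
        simp [EuclideanSpace.basisFun_apply, norm_smul, EuclideanSpace.norm_single]

lemma aux_dom {X : Type*} [MeasurableSpace X] (P₀ : Measure X)
    {n : ℕ} (t : X → EuclideanSpace ℝ (Fin n))
    (Θ : Set (EuclideanSpace ℝ (Fin n))) (hΘopen : IsOpen Θ)
    (hΘfin : ∀ ϑ ∈ Θ, Integrable (fun x => Real.exp (⟪ϑ, t x⟫)) P₀)
    {θ₀ : EuclideanSpace ℝ (Fin n)} (hθ₀ : θ₀ ∈ Θ) :
    ∃ ρ > 0, ∃ G : X → ℝ, Integrable G P₀ ∧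
      ∀ θ ∈ Metric.ball θ₀ ρ, ∀ x,
        Real.exp ⟪θ, t x⟫ ≤ G x ∧ ‖t x‖ * Real.exp ⟪θ, t x⟫ ≤ G x := by
  obtain ⟨ε, hε, hball⟩ := Metric.isOpen_iff.1 hΘopen θ₀ hθ₀
  set δ := ε / 2 with hδ
  have hδpos : 0 < δ := by positivity
  have hcb : Metric.closedBall θ₀ δ ⊆ Θ :=
    (Metric.closedBall_subset_ball (by rw [hδ]; linarith)).trans hball
  set c := δ / (Real.sqrt n + 1) with hc
  have hsqrt : (0:ℝ) ≤ Real.sqrt n := Real.sqrt_nonneg _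
  have hcpos : 0 < c := by apply div_pos hδpos; linarith
  -- sign vectors
  set σ : (Fin n → Bool) → EuclideanSpace ℝ (Fin n) :=
    fun s => (WithLp.equiv 2 (Fin n → ℝ)).symm (fun i => if s i then c else -c) with hσdef
  have hσapp : ∀ s i, σ s i = if s i then c else -c := fun s i => rfl
  have hσnorm : ∀ s, ‖σ s‖ ≤ δ := by
    intro s
    have h1 : ‖σ s‖ = Real.sqrt (∑ _i : Fin n, c ^ 2) := by
      rw [EuclideanSpace.norm_eq]
      congr 1
      refine Finset.sum_congr rfl fun i _ => ?_
      rw [hσapp]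
      by_cases h : s i <;> simp [h, abs_of_pos hcpos, sq_abs]
    rw [h1, Finset.sum_const, Finset.card_univ, Fintype.card_fin, nsmul_eq_mul,
      Real.sqrt_mul (Nat.cast_nonneg n), Real.sqrt_sq hcpos.le, mul_comm, hc,
      div_mul_eq_mul_div, div_le_iff₀ (by positivity)]
    nlinarith
  have hσΘ : ∀ s, θ₀ + σ s ∈ Θ := by
    intro s
    apply hcb
    simpa [Metric.mem_closedBall, dist_eq_norm] using hσnorm s
  have hσinner : ∀ s x, ⟪σ s, t x⟫ = ∑ i, (if s i then c else -c) * t x i := by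
    intro s x
    rw [PiLp.inner_apply]
    refine Finset.sum_congr rfl fun i _ => ?_
    rw [hσapp, RCLike.inner_apply', conj_trivial]
  -- key pointwise bound
  have hkey : ∀ x, Real.exp (⟪θ₀, t x⟫ + c * ∑ i, |t x i|)
      ≤ ∑ s : Fin n → Bool, Real.exp ⟪θ₀ + σ s, t x⟫ := by
    intro x
    set s₀ : Fin n → Bool := fun i => decide (0 ≤ t x i) with hs₀
    have h2 : ⟪θ₀ + σ s₀, t x⟫ = ⟪θ₀, t x⟫ + c * ∑ i, |t x i| := by
      rw [inner_add_left, hσinner, Finset.mul_sum]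
      congr 1
      refine Finset.sum_congr rfl fun i _ => ?_
      by_cases h : 0 ≤ t x i
      · simp only [hs₀, decide_eq_true_eq, if_pos h, abs_of_nonneg h]
      · push_neg at h
        simp only [hs₀, decide_eq_true_eq, if_neg (not_le.2 h), abs_of_neg h]
        ring
    rw [← h2]
    exact Finset.single_le_sum (f := fun s => Real.exp ⟪θ₀ + σ s, t x⟫)
      (fun s _ => (Real.exp_pos _).le) (Finset.mem_univ s₀)
  refine ⟨c / 2, by positivity, fun x => (1 + 2 / c) * ∑ s : Fin n → Bool,
    Real.exp ⟪θ₀ + σ s, t x⟫, ?_, ?_⟩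
  · exact (integrable_finset_sum _ fun s _ => hΘfin _ (hσΘ s)).const_mul _
  · intro θ hθ x
    set L := ∑ i, |t x i| with hL
    have hLnn : 0 ≤ L := Finset.sum_nonneg fun i _ => abs_nonneg _
    have hsum_pos : 0 < ∑ s : Fin n → Bool, Real.exp ⟪θ₀ + σ s, t x⟫ :=
      Finset.sum_pos (fun s _ => Real.exp_pos _) ⟨fun _ => true, Finset.mem_univ _⟩
    have hdist : ‖θ - θ₀‖ ≤ c / 2 := le_of_lt (by
      rw [← dist_eq_norm]; exact Metric.mem_ball.1 hθ)
    have hnorm_le : ‖t x‖ ≤ L := euclid_norm_le_sum_abs (t x)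
    have hinner_le : ⟪θ, t x⟫ ≤ ⟪θ₀, t x⟫ + (c / 2) * L := by
      have h5 : ⟪θ - θ₀, t x⟫ = ⟪θ, t x⟫ - ⟪θ₀, t x⟫ := inner_sub_left _ _ _
      have h3 : ⟪θ - θ₀, t x⟫ ≤ ‖θ - θ₀‖ * ‖t x‖ := real_inner_le_norm _ _
      nlinarith [norm_nonneg (t x), norm_nonneg (θ - θ₀)]
    have hexp1 : Real.exp ⟪θ, t x⟫ ≤ Real.exp (⟪θ₀, t x⟫ + c * L) := by
      apply Real.exp_le_exp.2; nlinarith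
    have hbase := le_trans hexp1 (hkey x)
    constructor
    · calc Real.exp ⟪θ, t x⟫ ≤ ∑ s : Fin n → Bool, Real.exp ⟪θ₀ + σ s, t x⟫ := hbase
        _ ≤ (1 + 2 / c) * ∑ s : Fin n → Bool, Real.exp ⟪θ₀ + σ s, t x⟫ := by
            nlinarith [mul_nonneg (div_nonneg (by norm_num : (0:ℝ) ≤ 2) hcpos.le) hsum_pos.le]
    · have hLle : ‖t x‖ ≤ (2 / c) * Real.exp ((c / 2) * L) := by
        have hu : (c / 2) * L ≤ Real.exp ((c / 2) * L) := (Real.add_one_le_exp _).trans'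
          (by linarith)
        calc ‖t x‖ ≤ L := hnorm_le
          _ ≤ (2 / c) * ((c / 2) * L) := le_of_eq (by field_simp)
          _ ≤ (2 / c) * Real.exp ((c / 2) * L) := by
              apply mul_le_mul_of_nonneg_left hu (by positivity)
      have hexp2 : Real.exp ((c/2) * L) * Real.exp ⟪θ, t x⟫ ≤ Real.exp (⟪θ₀, t x⟫ + c * L) := by
        rw [← Real.exp_add]
        apply Real.exp_le_exp.2; nlinarith
      calc ‖t x‖ * Real.exp ⟪θ, t x⟫
          ≤ ((2 / c) * Real.exp ((c / 2) * L)) * Real.exp ⟪θ, t x⟫ := by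
            apply mul_le_mul_of_nonneg_right hLle (Real.exp_pos _).le
        _ = (2 / c) * (Real.exp ((c / 2) * L) * Real.exp ⟪θ, t x⟫) := by ring
        _ ≤ (2 / c) * Real.exp (⟪θ₀, t x⟫ + c * L) := by
            apply mul_le_mul_of_nonneg_left hexp2 (by positivity)
        _ ≤ (2 / c) * ∑ s : Fin n → Bool, Real.exp ⟪θ₀ + σ s, t x⟫ := by
            apply mul_le_mul_of_nonneg_left (hkey x) (by positivity)
        _ ≤ (1 + 2 / c) * ∑ s : Fin n → Bool, Real.exp ⟪θ₀ + σ s, t x⟫ := by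
            nlinarith [mul_nonneg (div_nonneg (by norm_num : (0:ℝ) ≤ 2) hcpos.le) hsum_pos.le]

set_option synthInstance.maxHeartbeats 1000000 in
set_option maxHeartbeats 1000000 in
lemma aux_grad {X : Type*} [MeasurableSpace X] (P₀ : Measure X)
    {n : ℕ} (t : X → EuclideanSpace ℝ (Fin n)) (ht : Measurable t)
    (Θ : Set (EuclideanSpace ℝ (Fin n))) (hΘopen : IsOpen Θ)
    (hΘfin : ∀ ϑ ∈ Θ, Integrable (fun x => Real.exp (⟪ϑ, t x⟫)) P₀)
    (g : X → ℝ) (hg : Measurable g) {C : ℝ} (hgC : ∀ x, |g x| ≤ C)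
    {θ₀ : EuclideanSpace ℝ (Fin n)} (hθ₀ : θ₀ ∈ Θ) :
    HasFDerivAt (fun θ => ∫ x, g x * Real.exp ⟪θ, t x⟫ ∂P₀)
      ((InnerProductSpace.toDual ℝ (EuclideanSpace ℝ (Fin n)))
        (∫ x, (g x * Real.exp ⟪θ₀, t x⟫) • t x ∂P₀)) θ₀ ∧
    Integrable (fun x => (g x * Real.exp ⟪θ₀, t x⟫) • t x) P₀ ∧
    Integrable (fun x => g x * Real.exp ⟪θ₀, t x⟫) P₀ := by
  obtain ⟨ρ, hρ, G, hGint, hGbd⟩ := aux_dom P₀ t Θ hΘopen hΘfin hθ₀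
  set C' := max C 0 with hC'
  have hgC' : ∀ x, |g x| ≤ C' := fun x => (hgC x).trans (le_max_left _ _)
  have hC'0 : (0:ℝ) ≤ C' := le_max_right _ _
  have hθ₀ball : θ₀ ∈ Metric.ball θ₀ ρ := Metric.mem_ball_self hρ
  have hinner_meas : ∀ θ : EuclideanSpace ℝ (Fin n), Measurable fun x => ⟪θ, t x⟫ :=
    fun θ => ((innerSL ℝ θ).continuous.measurable).comp ht
  have hexp_meas : ∀ θ : EuclideanSpace ℝ (Fin n), Measurable fun x => Real.exp ⟪θ, t x⟫ :=
    fun θ => Real.measurable_exp.comp (hinner_meas θ)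
  have hFmeas : ∀ θ : EuclideanSpace ℝ (Fin n),
      AEStronglyMeasurable (fun x => g x * Real.exp ⟪θ, t x⟫) P₀ :=
    fun θ => (hg.mul (hexp_meas θ)).aestronglyMeasurable
  have hint1 : Integrable (fun x => g x * Real.exp ⟪θ₀, t x⟫) P₀ := by
    apply Integrable.mono' (hGint.const_mul C') (hFmeas θ₀)
    filter_upwards with x
    rw [Real.norm_eq_abs, abs_mul, abs_of_pos (Real.exp_pos _)]
    exact mul_le_mul (hgC' x) (hGbd θ₀ hθ₀ball x).1 (Real.exp_pos _).le hC'0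
  have hintv : Integrable (fun x => (g x * Real.exp ⟪θ₀, t x⟫) • t x) P₀ := by
    apply Integrable.mono' (hGint.const_mul C')
      ((hg.mul (hexp_meas θ₀)).aestronglyMeasurable.smul ht.aestronglyMeasurable)
    filter_upwards with x
    change ‖(g x * Real.exp ⟪θ₀, t x⟫) • t x‖ ≤ C' * G x
    rw [norm_smul, Real.norm_eq_abs, abs_mul, abs_of_pos (Real.exp_pos _)]
    calc |g x| * Real.exp ⟪θ₀, t x⟫ * ‖t x‖
        = |g x| * (‖t x‖ * Real.exp ⟪θ₀, t x⟫) := by ring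
      _ ≤ C' * G x := mul_le_mul (hgC' x) (hGbd θ₀ hθ₀ball x).2
          (mul_nonneg (norm_nonneg _) (Real.exp_pos _).le) hC'0
  refine ⟨?_, hintv, hint1⟩
  have hsmul_eq : ∀ (a : ℝ) (v : EuclideanSpace ℝ (Fin n)),
      innerSL ℝ (a • v) = a • innerSL ℝ v := by
    intro a v
    apply ContinuousLinearMap.ext; intro w
    simp [real_inner_smul_left]
  have hF'int : Integrable
      (fun x => innerSL ℝ ((g x * Real.exp ⟪θ₀, t x⟫) • t x)) P₀ := by
    apply Integrable.mono' (hGint.const_mul C')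
      ((innerSL ℝ).continuous.comp_aestronglyMeasurable
        ((hg.mul (hexp_meas θ₀)).aestronglyMeasurable.smul ht.aestronglyMeasurable))
    filter_upwards with x
    change ‖innerSL ℝ ((g x * Real.exp ⟪θ₀, t x⟫) • t x)‖ ≤ C' * G x
    rw [innerSL_apply_norm, norm_smul, Real.norm_eq_abs, abs_mul,
      abs_of_pos (Real.exp_pos _)]
    calc |g x| * Real.exp ⟪θ₀, t x⟫ * ‖t x‖
        = |g x| * (‖t x‖ * Real.exp ⟪θ₀, t x⟫) := by ring
      _ ≤ C' * G x := mul_le_mul (hgC' x) (hGbd θ₀ hθ₀ball x).2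
          (mul_nonneg (norm_nonneg _) (Real.exp_pos _).le) hC'0
  have hmain := hasFDerivAt_integral_of_dominated_of_fderiv_le
    (F := fun θ x => g x * Real.exp ⟪θ, t x⟫)
    (F' := fun θ x => innerSL ℝ ((g x * Real.exp ⟪θ, t x⟫) • t x))
    (bound := fun x => C' * G x) (Metric.ball_mem_nhds θ₀ hρ)
    (Filter.Eventually.of_forall fun θ => hFmeas θ) hint1 hF'int.aestronglyMeasurable
    ?_ (hGint.const_mul C') ?_
  · have hF'eq : (∫ x, innerSL ℝ ((g x * Real.exp ⟪θ₀, t x⟫) • t x) ∂P₀)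
        = (InnerProductSpace.toDual ℝ (EuclideanSpace ℝ (Fin n)))
          (∫ x, (g x * Real.exp ⟪θ₀, t x⟫) • t x ∂P₀) := by
      apply ContinuousLinearMap.ext; intro v
      rw [ContinuousLinearMap.integral_apply hF'int v, InnerProductSpace.toDual_apply_apply,
        real_inner_comm, ← integral_inner hintv v]
      congr 1; funext x
      rw [innerSL_apply_apply, real_inner_comm]
    rwa [hF'eq] at hmain
  · filter_upwards with x
    intro θ hθ
    rw [innerSL_apply_norm, norm_smul, Real.norm_eq_abs, abs_mul,
      abs_of_pos (Real.exp_pos _)]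
    calc |g x| * Real.exp ⟪θ, t x⟫ * ‖t x‖
        = |g x| * (‖t x‖ * Real.exp ⟪θ, t x⟫) := by ring
      _ ≤ C' * G x := mul_le_mul (hgC' x) (hGbd θ hθ x).2
          (mul_nonneg (norm_nonneg _) (Real.exp_pos _).le) hC'0
  · filter_upwards with x
    intro θ hθ
    have h1 : HasFDerivAt (fun θ : EuclideanSpace ℝ (Fin n) => ⟪θ, t x⟫)
        (innerSL ℝ (t x)) θ := by
      have h0 := (innerSL ℝ (t x)).hasFDerivAt (x := θ)
      have heq : (fun θ : EuclideanSpace ℝ (Fin n) => ⟪θ, t x⟫)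
          = fun θ : EuclideanSpace ℝ (Fin n) => (innerSL ℝ (t x)) θ :=
        funext fun θ => real_inner_comm _ _
      rw [heq]; exact h0
    have h3 := h1.exp.const_mul (g x)
    rwa [smul_smul, ← hsmul_eq] at h3

lemma aux_withDensity {X : Type*} [MeasurableSpace X] (P₀ : Measure X)
    {V : Type*} [NormedAddCommGroup V] [NormedSpace ℝ V]
    (w : X → ℝ) (hw : Measurable w) (h : X → V) :
    ∫ x, h x ∂(P₀.withDensity fun x => ENNReal.ofReal (Real.exp (w x)))
      = ∫ x, Real.exp (w x) • h x ∂P₀ := by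
  have : (fun x => ENNReal.ofReal (Real.exp (w x)))
      = fun x => ((Real.toNNReal (Real.exp (w x)) : ℝ≥0) : ℝ≥0∞) := rfl
  rw [this, integral_withDensity_eq_integral_smul
    (f := fun x => (Real.exp (w x)).toNNReal) (by fun_prop) h]
  congr 1; funext x
  rw [NNReal.smul_def, Real.coe_toNNReal _ (Real.exp_pos _).le]

set_option maxHeartbeats 1000000 in
/-- Differentiability of the expected fitness for an exponential family: on an open set `Θ`
where the log-partition `ψ(θ) = ln ∫ exp(⟪θ, t x⟫) dP₀` is finite, `ψ` is differentiable
with gradient `∫ t dP_θ`, and `J(θ) = ∫ F dP_θ` (for a bounded measurable `F`) is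
differentiable with gradient `∫ F(x)·(t(x) − ∇ψ(θ)) dP_θ(x)`. -/
theorem stmt_4 {X : Type*} [MeasurableSpace X] (P₀ : Measure X) [SigmaFinite P₀]
    {n : ℕ} (t : X → EuclideanSpace ℝ (Fin n)) (ht : Measurable t)
    (ψ : EuclideanSpace ℝ (Fin n) → ℝ)
    (hψ : ∀ ϑ, ψ ϑ = Real.log (∫ x, Real.exp (⟪ϑ, t x⟫) ∂P₀))
    (Θ : Set (EuclideanSpace ℝ (Fin n))) (hΘopen : IsOpen Θ)
    (hΘfin : ∀ ϑ ∈ Θ, Integrable (fun x => Real.exp (⟪ϑ, t x⟫)) P₀)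
    (F : X → ℝ) (hFmeas : Measurable F) (hFbdd : ∃ C : ℝ, ∀ x, |F x| ≤ C)
    (P : EuclideanSpace ℝ (Fin n) → Measure X)
    (hP : ∀ ϑ, P ϑ = P₀.withDensity (fun x => ENNReal.ofReal (Real.exp (⟪ϑ, t x⟫ - ψ ϑ))))
    (J : EuclideanSpace ℝ (Fin n) → ℝ)
    (hJ : ∀ ϑ, J ϑ = ∫ x, F x ∂(P ϑ)) :
    ∀ θ ∈ Θ,
      HasGradientAt ψ (∫ x, t x ∂(P θ)) θ ∧
      HasGradientAt J (∫ x, F x • (t x - ∫ y, t y ∂(P θ)) ∂(P θ)) θ := by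
  intro θ hθ
  obtain ⟨C, hC⟩ := hFbdd
  by_cases hP0 : P₀ = 0
  · -- degenerate case
    subst hP0
    have hPz : ∀ ϑ, P ϑ = 0 := by
      intro ϑ
      rw [hP ϑ]
      ext s hs
      rw [withDensity_apply _ hs]
      simp
    have hψ0 : ψ = fun _ => (0:ℝ) := funext fun ϑ => by
      rw [hψ ϑ, integral_zero_measure, Real.log_zero]
    have hJ0 : J = fun _ => (0:ℝ) := funext fun ϑ => by
      rw [hJ ϑ, hPz ϑ, integral_zero_measure]
    constructor
    · rw [hPz θ]
      rw [integral_zero_measure, hψ0]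
      exact hasGradientAt_const θ (0:ℝ)
    · rw [hPz θ]
      rw [integral_zero_measure, hJ0]
      exact hasGradientAt_const θ (0:ℝ)
  · -- main case
    have hwmeas : ∀ ϑ : EuclideanSpace ℝ (Fin n),
        Measurable fun x => ⟪ϑ, t x⟫ - ψ ϑ := fun ϑ =>
      (((innerSL ℝ ϑ).continuous.measurable).comp ht).sub measurable_const
    obtain ⟨hZd, hZintv, hZint1⟩ := aux_grad P₀ t ht Θ hΘopen hΘfin
      (fun _ => (1:ℝ)) measurable_const (C := 1) (fun x => by norm_num) hθ
    obtain ⟨hNd, hNintv, hNint1⟩ := aux_grad P₀ t ht Θ hΘopen hΘfin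
      F hFmeas hC hθ
    simp only [one_mul] at hZd hZintv hZint1
    have hZpos : (0:ℝ) < ∫ x, Real.exp ⟪θ, t x⟫ ∂P₀ := by
      apply (integral_pos_iff_support_of_nonneg
        (fun x => (Real.exp_pos _).le) hZint1).2
      have hsup : (Function.support fun x => Real.exp ⟪θ, t x⟫) = Set.univ :=
        Set.eq_univ_of_forall fun x => (Real.exp_pos _).ne'
      rw [hsup]
      exact Measure.measure_univ_pos.mpr hP0
    have hexpψ : Real.exp (-ψ θ) = (∫ x, Real.exp ⟪θ, t x⟫ ∂P₀)⁻¹ := by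
      rw [hψ θ, Real.exp_neg, Real.exp_log hZpos]
    -- the gradient of ψ as a vector
    obtain ⟨gv, hgv⟩ : ∃ gv : EuclideanSpace ℝ (Fin n),
        gv = (∫ x, Real.exp ⟪θ, t x⟫ ∂P₀)⁻¹ • (∫ x, Real.exp ⟪θ, t x⟫ • t x ∂P₀) :=
      ⟨_, rfl⟩
    have hψd : HasFDerivAt ψ
        ((InnerProductSpace.toDual ℝ (EuclideanSpace ℝ (Fin n))) gv) θ := by
      have hψeq : ψ = fun ϑ => Real.log (∫ x, Real.exp ⟪ϑ, t x⟫ ∂P₀) := funext hψ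
      have hlog : HasDerivAt Real.log (∫ x, Real.exp ⟪θ, t x⟫ ∂P₀)⁻¹
          (∫ x, Real.exp ⟪θ, t x⟫ ∂P₀) := Real.hasDerivAt_log hZpos.ne'
      have hcomp := hlog.comp_hasFDerivAt θ hZd
      rw [hψeq, hgv, _root_.map_smul]
      exact hcomp
    -- identify ∫ t dPθ with gv
    have hint_t : (∫ x, t x ∂(P θ)) = gv := by
      rw [hP θ, aux_withDensity P₀ _ (hwmeas θ) t]
      calc ∫ x, Real.exp (⟪θ, t x⟫ - ψ θ) • t x ∂P₀
          = ∫ x, Real.exp (-ψ θ) • (Real.exp ⟪θ, t x⟫ • t x) ∂P₀ := by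
            congr 1; funext x
            rw [smul_smul, ← Real.exp_add]
            congr 2
            ring
        _ = Real.exp (-ψ θ) • ∫ x, Real.exp ⟪θ, t x⟫ • t x ∂P₀ := integral_smul _ _
        _ = gv := by rw [hexpψ, hgv]
    refine ⟨?_, ?_⟩
    · rw [hint_t]
      exact hasGradientAt_iff_hasFDerivAt.2 hψd
    · -- expected fitness
      have hJf : J = fun ϑ =>
          Real.exp (-ψ ϑ) * ∫ x, F x * Real.exp ⟪ϑ, t x⟫ ∂P₀ := by
        funext ϑ
        rw [hJ ϑ, hP ϑ, aux_withDensity P₀ _ (hwmeas ϑ) F]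
        calc ∫ x, Real.exp (⟪ϑ, t x⟫ - ψ ϑ) • F x ∂P₀
            = ∫ x, Real.exp (-ψ ϑ) * (F x * Real.exp ⟪ϑ, t x⟫) ∂P₀ := by
              congr 1; funext x
              rw [smul_eq_mul, sub_eq_neg_add, Real.exp_add]
              ring
          _ = Real.exp (-ψ ϑ) * ∫ x, F x * Real.exp ⟪ϑ, t x⟫ ∂P₀ :=
              integral_const_mul _ _
      have hJd : HasFDerivAt J
          ((InnerProductSpace.toDual ℝ (EuclideanSpace ℝ (Fin n)))
            (Real.exp (-ψ θ) • (∫ x, (F x * Real.exp ⟪θ, t x⟫) • t x ∂P₀)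
              - ((∫ x, F x * Real.exp ⟪θ, t x⟫ ∂P₀) * Real.exp (-ψ θ)) • gv)) θ := by
        have hexpd : HasFDerivAt (fun ϑ => Real.exp (-ψ ϑ))
            (Real.exp (-ψ θ) • (-(InnerProductSpace.toDual ℝ
              (EuclideanSpace ℝ (Fin n)) gv))) θ := hψd.neg.exp
        have harith : Real.exp (-ψ θ) •
              ((InnerProductSpace.toDual ℝ (EuclideanSpace ℝ (Fin n)))
                (∫ x, (F x * Real.exp ⟪θ, t x⟫) • t x ∂P₀))
            + (∫ x, F x * Real.exp ⟪θ, t x⟫ ∂P₀) •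
              (Real.exp (-ψ θ) • -((InnerProductSpace.toDual ℝ
                (EuclideanSpace ℝ (Fin n))) gv))
            = (InnerProductSpace.toDual ℝ (EuclideanSpace ℝ (Fin n)))
              (Real.exp (-ψ θ) • (∫ x, (F x * Real.exp ⟪θ, t x⟫) • t x ∂P₀)
                - ((∫ x, F x * Real.exp ⟪θ, t x⟫ ∂P₀) * Real.exp (-ψ θ)) • gv) := by
          rw [_root_.map_sub, _root_.map_smul, _root_.map_smul]
          module
        have hmul := hexpd.mul hNd
        rw [hJf]
        rwa [harith] at hmul
      rw [show (∫ x, F x • (t x - ∫ y, t y ∂(P θ)) ∂(P θ))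
          = Real.exp (-ψ θ) • (∫ x, (F x * Real.exp ⟪θ, t x⟫) • t x ∂P₀)
            - ((∫ x, F x * Real.exp ⟪θ, t x⟫ ∂P₀) * Real.exp (-ψ θ)) • gv from ?_]
      · exact hasGradientAt_iff_hasFDerivAt.2 hJd
      · rw [hint_t, hP θ, aux_withDensity P₀ _ (hwmeas θ) (fun x => F x • (t x - gv))]
        calc ∫ x, Real.exp (⟪θ, t x⟫ - ψ θ) • (F x • (t x - gv)) ∂P₀
            = ∫ x, Real.exp (-ψ θ) • ((F x * Real.exp ⟪θ, t x⟫) • t x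
                - (F x * Real.exp ⟪θ, t x⟫) • gv) ∂P₀ := by
              congr 1; funext x
              rw [← smul_sub, smul_smul, smul_smul]
              congr 1
              rw [sub_eq_neg_add, Real.exp_add]
              ring
          _ = Real.exp (-ψ θ) • ((∫ x, (F x * Real.exp ⟪θ, t x⟫) • t x ∂P₀)
                - (∫ x, F x * Real.exp ⟪θ, t x⟫ ∂P₀) • gv) := by
              rw [integral_smul, integral_sub hNintv (hNint1.smul_const gv),
                integral_smul_const]
          _ = Real.exp (-ψ θ) • (∫ x, (F x * Real.exp ⟪θ, t x⟫) • t x ∂P₀)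
                - ((∫ x, F x * Real.exp ⟪θ, t x⟫ ∂P₀) * Real.exp (-ψ θ)) • gv := by
              module
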